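/- Let V be a real inner product space of dimension ñ and W ⊆ V a subspace of dimension n, with orthogonal complement W^⊥. The real vector space of all linear maps c : W → so(V) satisfying c(x)y = c(y)x for all x, y ∈ W has dimension (ñ−n)·n(n+1)/2 + n·(ñ−n)(ñ−n−1)/2. (Equivalently, the generalized Spencer cohomology group H^{1,1}(so_ñ(ℝ), W) is isomorphic to W^⊥ ⊗ S²W^* ⊕ so(W^⊥) ⊗ W^*; in particular the so(W)-block of any such c vanishes, which is the statement that the first prolongation of so(n) is zero.) -/

import Mathlib

open RealInnerProductSpace Module

/-- The space `Z^{1,1}` of generalized Spencer cocycles: linear maps `c : W → 𝔰𝔬(V)`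
(values skew-adjoint) satisfying `c(x)y = c(y)x` for all `x, y ∈ W`. -/
def spencerZ11 (V : Type*) [NormedAddCommGroup V] [InnerProductSpace ℝ V]
    (W : Submodule ℝ V) : Submodule ℝ (W →ₗ[ℝ] (V →ₗ[ℝ] V)) where
  carrier := {c | (∀ (x : W) (u v : V), ⟪c x u, v⟫ = - ⟪u, c x v⟫) ∧
      ∀ x y : W, c x ↑y = c y ↑x}
  add_mem' := by
    rintro a b ⟨ha₁, ha₂⟩ ⟨hb₁, hb₂⟩
    refine ⟨fun x u v => ?_, fun x y => ?_⟩
    · simp [ha₁ x u v, hb₁ x u v, inner_add_left, inner_add_right]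
      ring
    · simp [ha₂ x y, hb₂ x y]
  zero_mem' := by
    refine ⟨fun x u v => ?_, fun x y => ?_⟩ <;> simp
  smul_mem' := by
    rintro t a ⟨ha₁, ha₂⟩
    refine ⟨fun x u v => ?_, fun x y => ?_⟩
    · simp [ha₁ x u v, real_inner_smul_left, real_inner_smul_right]
    · simp [ha₂ x y]

/- ### Auxiliary material for the dimension count -/

lemma spencer_card_le_pairs (n : ℕ) :
    Fintype.card {p : Fin n × Fin n // p.1 ≤ p.2} = n * (n + 1) / 2 := by
  rw [← Fintype.card_congr (Sym2.sortEquiv (α := Fin n)), Sym2.card]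
  simp [Nat.choose_two_right, Nat.mul_comm]

lemma spencer_card_lt_pairs (n : ℕ) :
    Fintype.card {p : Fin n × Fin n // p.1 < p.2} = n * (n - 1) / 2 := by
  have e : {a : Sym2 (Fin n) // ¬ a.IsDiag} ≃ {p : Fin n × Fin n // p.1 < p.2} :=
    ((Sym2.sortEquiv (α := Fin n)).subtypeEquiv
      (p := fun a => ¬ a.IsDiag) (q := fun b => b.1.1 < b.1.2) (by
        intro a
        induction a using Sym2.ind with
        | _ x y =>
          simp only [Sym2.mk_isDiag_iff, Sym2.sortEquiv_apply_coe]
          simp [inf_lt_sup, eq_comm])).trans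
      ((Equiv.subtypeSubtypeEquivSubtypeInter (fun p : Fin n × Fin n => p.1 ≤ p.2)
          (fun p => p.1 < p.2)).trans
        (Equiv.subtypeEquivRight (by rintro ⟨x, y⟩; exact and_iff_right_of_imp le_of_lt)))
  rw [← Fintype.card_congr e, Sym2.card_subtype_not_diag]
  simp [Nat.choose_two_right]

/-- A bilinear map which is symmetric on a basis is symmetric. -/
lemma spencer_symm_of_basis {R : Type*} [CommSemiring R] {E F : Type*} [AddCommMonoid E]
    [Module R E] [AddCommMonoid F] [Module R F] {ι : Type*} (b : Basis ι R E)
    (T : E →ₗ[R] E →ₗ[R] F) (h : ∀ i j, T (b i) (b j) = T (b j) (b i)) :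
    ∀ x y, T x y = T y x := by
  have hT : T = T.flip := by
    apply b.ext; intro i; apply b.ext; intro j
    simpa using h i j
  intro x y
  conv_lhs => rw [hT]
  rfl

/-- An endomorphism which is skew-adjoint on an orthonormal basis is skew-adjoint. -/
lemma spencer_skew_of_basis {V : Type*} [NormedAddCommGroup V] [InnerProductSpace ℝ V]
    {ι : Type*} [Fintype ι] (b : OrthonormalBasis ι ℝ V) (A : V →ₗ[ℝ] V)
    (h : ∀ i j, ⟪A (b i), b j⟫ = - ⟪b i, A (b j)⟫) (u v : V) :
    ⟪A u, v⟫ = - ⟪u, A v⟫ := by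
  rw [← b.sum_repr' u, ← b.sum_repr' v]
  rw [map_sum, map_sum, sum_inner, sum_inner]
  rw [← Finset.sum_neg_distrib]
  refine Finset.sum_congr rfl fun i _ => ?_
  rw [inner_sum, inner_sum, ← Finset.sum_neg_distrib]
  refine Finset.sum_congr rfl fun j _ => ?_
  simp only [LinearMap.map_smul, real_inner_smul_left, real_inner_smul_right]
  rw [h i j]
  ring

/-- The index type for the dimension count. -/
abbrev spencerPairIdx (n m : ℕ) : Type :=
  ({p : Fin n × Fin n // p.1 ≤ p.2} × Fin m) ⊕ (Fin n × {q : Fin m × Fin m // q.1 < q.2})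

/-- The ordered representative of an unordered pair. -/
def spencerSympair {n : ℕ} (a b : Fin n) : {p : Fin n × Fin n // p.1 ≤ p.2} :=
  if h : a ≤ b then ⟨(a, b), h⟩ else ⟨(b, a), le_of_not_ge h⟩

lemma spencerSympair_comm {n : ℕ} (a b : Fin n) :
    spencerSympair a b = spencerSympair b a := by
  unfold spencerSympair
  rcases lt_trichotomy a b with h | rfl | h
  · rw [dif_pos h.le, dif_neg (not_le.2 h)]
  · rfl
  · rw [dif_neg (not_le.2 h), dif_pos h.le]

lemma spencerSympair_of_le {n : ℕ} {a b : Fin n} (h : a ≤ b) :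
    spencerSympair a b = ⟨(a, b), h⟩ := dif_pos h

/-- The matrix entries of the cocycle built from the free data `f`. -/
def spencerH {n m : ℕ} (f : spencerPairIdx n m → ℝ) (a : Fin n) :
    (Fin n ⊕ Fin m) → (Fin n ⊕ Fin m) → ℝ
  | .inl _, .inl _ => 0
  | .inl b, .inr μ => f (.inl (spencerSympair a b, μ))
  | .inr μ, .inl b => - f (.inl (spencerSympair a b, μ))
  | .inr μ, .inr ν =>
      if h : μ < ν then f (.inr (a, ⟨(μ, ν), h⟩))
      else if h' : ν < μ then - f (.inr (a, ⟨(ν, μ), h'⟩)) else 0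

lemma spencerH_skew {n m : ℕ} (f : spencerPairIdx n m → ℝ) (a : Fin n)
    (i j : Fin n ⊕ Fin m) : spencerH f a i j = - spencerH f a j i := by
  rcases i with b | μ <;> rcases j with d | ν <;> simp only [spencerH, neg_neg, neg_zero]
  rcases lt_trichotomy μ ν with h | rfl | h
  · simp [h, lt_asymm h]
  · simp
  · simp [h, lt_asymm h]

lemma spencerH_symm {n m : ℕ} (f : spencerPairIdx n m → ℝ) (a b : Fin n)
    (j : Fin n ⊕ Fin m) : spencerH f a (.inl b) j = spencerH f b (.inl a) j := by
  rcases j with d | ν <;> simp only [spencerH, spencerSympair_comm a b]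

set_option maxHeartbeats 1000000 in
/-- `H^{1,1}(𝔰𝔬(V), W) ≅ W^⊥ ⊗ S²W^* ⊕ 𝔰𝔬(W^⊥) ⊗ W^*`: the dimension of the space of
Spencer cocycles `c : W → 𝔰𝔬(V)`, `c(x)y = c(y)x`, equals
`(ñ−n)·n(n+1)/2 + n·(ñ−n)(ñ−n−1)/2` where `ñ = dim V`, `n = dim W`. -/
theorem finrank_spencerZ11 (V : Type*) [NormedAddCommGroup V] [InnerProductSpace ℝ V]
    [FiniteDimensional ℝ V] (W : Submodule ℝ V) :
    finrank ℝ ↥(spencerZ11 V W)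
      = (finrank ℝ V - finrank ℝ W) * (finrank ℝ W * (finrank ℝ W + 1) / 2)
        + finrank ℝ W
          * ((finrank ℝ V - finrank ℝ W) * (finrank ℝ V - finrank ℝ W - 1) / 2) := by
  classical
  set n := finrank ℝ W with hn
  set m := finrank ℝ Wᗮ with hm
  have hadd : n + m = finrank ℝ V := W.finrank_add_finrank_orthogonal
  have hnm : finrank ℝ V - n = m := by omega
  -- orthonormal bases of `W` and `Wᗮ`, and the assembled basis of `V`
  let bW : OrthonormalBasis (Fin n) ℝ W := stdOrthonormalBasis ℝ W
  let bP : OrthonormalBasis (Fin m) ℝ Wᗮ := stdOrthonormalBasis ℝ Wᗮ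
  let e : Fin n ⊕ Fin m → V := Sum.elim (fun a => (bW a : V)) (fun μ => (bP μ : V))
  have he_orth : Orthonormal ℝ e := by
    rw [orthonormal_iff_ite]
    rintro (a | μ) (b | ν)
    · have := orthonormal_iff_ite.mp bW.orthonormal a b
      simpa [e, Submodule.coe_inner] using this
    · rw [if_neg (by simp)]
      exact (bP ν).2 _ (bW a).2
    · rw [if_neg (by simp)]
      show ⟪(bP μ : V), (bW b : V)⟫ = 0
      rw [real_inner_comm]
      exact (bP μ).2 _ (bW b).2
    · have := orthonormal_iff_ite.mp bP.orthonormal μ ν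
      simpa [e, Submodule.coe_inner] using this
  have hspan : Submodule.span ℝ (Set.range e) = ⊤ := by
    have h1 : Set.range e = (⇑W.subtype '' Set.range ⇑bW) ∪ (⇑Wᗮ.subtype '' Set.range ⇑bP) := by
      rw [Set.Sum.elim_range, ← Set.range_comp, ← Set.range_comp]; rfl
    rw [h1, Submodule.span_union, ← Submodule.map_span, ← Submodule.map_span]
    have h2 : Submodule.span ℝ (Set.range ⇑bW) = ⊤ := by
      rw [← bW.coe_toBasis]; exact bW.toBasis.span_eq
    have h3 : Submodule.span ℝ (Set.range ⇑bP) = ⊤ := by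
      rw [← bP.coe_toBasis]; exact bP.toBasis.span_eq
    rw [h2, h3, Submodule.map_top, Submodule.map_top, Submodule.range_subtype,
      Submodule.range_subtype]
    exact Submodule.sup_orthogonal_of_hasOrthogonalProjection
  let B : Basis (Fin n ⊕ Fin m) ℝ V := Basis.mk he_orth.linearIndependent hspan.ge
  have hBe : ⇑B = e := Basis.coe_mk _ _
  let ob : OrthonormalBasis (Fin n ⊕ Fin m) ℝ V := B.toOrthonormalBasis (hBe ▸ he_orth)
  have hobe : ⇑ob = e := by rw [Basis.coe_toOrthonormalBasis, hBe]
  have hinner : ∀ i j, ⟪e i, e j⟫ = if i = j then (1 : ℝ) else 0 :=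
    fun i j => orthonormal_iff_ite.mp he_orth i j
  have hzero : ∀ u : V, (∀ j, ⟪e j, u⟫ = 0) → u = 0 := by
    intro u hu
    rw [← ob.sum_repr' u]
    simp [hobe, hu]
  -- the coordinate map
  let F : ↥(spencerZ11 V W) →ₗ[ℝ] (spencerPairIdx n m → ℝ) :=
    { toFun := fun c => Sum.elim
        (fun pm => ⟪(c : W →ₗ[ℝ] V →ₗ[ℝ] V) (bW pm.1.1.1) ↑(bW pm.1.1.2), (bP pm.2 : V)⟫)
        (fun aq => ⟪(c : W →ₗ[ℝ] V →ₗ[ℝ] V) (bW aq.1) ↑(bP aq.2.1.1), (bP aq.2.1.2 : V)⟫)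
      map_add' := by
        intro c d; funext idx; rcases idx with pm | aq <;>
          simp [inner_add_left]
      map_smul' := by
        intro t c; funext idx; rcases idx with pm | aq <;>
          simp [real_inner_smul_left] }
  have hFinj : Function.Injective F := by
    suffices hker : ∀ c : ↥(spencerZ11 V W), F c = 0 → c = 0 by
      intro c d hcd
      have h0 : F (c - d) = 0 := by
        funext idx
        have hidx := congrFun hcd idx
        rcases idx with pm | aq
        · show ⟪((c - d : ↥(spencerZ11 V W)) : W →ₗ[ℝ] V →ₗ[ℝ] V) (bW pm.1.1.1)
              ↑(bW pm.1.1.2), (bP pm.2 : V)⟫ = 0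
          rw [Submodule.coe_sub, LinearMap.sub_apply, LinearMap.sub_apply, inner_sub_left]
          exact sub_eq_zero_of_eq hidx
        · show ⟪((c - d : ↥(spencerZ11 V W)) : W →ₗ[ℝ] V →ₗ[ℝ] V) (bW aq.1)
              ↑(bP aq.2.1.1), (bP aq.2.1.2 : V)⟫ = 0
          rw [Submodule.coe_sub, LinearMap.sub_apply, LinearMap.sub_apply, inner_sub_left]
          exact sub_eq_zero_of_eq hidx
      exact sub_eq_zero.mp (hker _ h0)
    intro c hc
    obtain ⟨hsk, hsy⟩ := c.2
    have hc' : ∀ idx, F c idx = 0 := fun idx => congrFun hc idx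
    set cl : W →ₗ[ℝ] V →ₗ[ℝ] V := (c : W →ₗ[ℝ] V →ₗ[ℝ] V) with hcl
    have hskew3 : ∀ a b d : Fin n,
        ⟪cl (bW a) ↑(bW b), (bW d : V)⟫ = - ⟪cl (bW a) ↑(bW d), (bW b : V)⟫ := by
      intro a b d
      rw [hsk (bW a) ↑(bW b) ↑(bW d), real_inner_comm]
    have hsym3 : ∀ a b d : Fin n,
        ⟪cl (bW a) ↑(bW b), (bW d : V)⟫ = ⟪cl (bW b) ↑(bW a), (bW d : V)⟫ := by
      intro a b d; rw [hsy (bW a) (bW b)]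
    have hWblock : ∀ a b d : Fin n, ⟪cl (bW a) ↑(bW b), (bW d : V)⟫ = 0 := by
      intro a b d
      have e1 := hsym3 a b d
      have e2 := hskew3 b a d
      have e3 := hsym3 b d a
      have e4 := hskew3 d b a
      have e5 := hsym3 d a b
      have e6 := hskew3 a d b
      linarith
    have hWP : ∀ (a b : Fin n) (μ : Fin m), ⟪cl (bW a) ↑(bW b), (bP μ : V)⟫ = 0 := by
      intro a b μ
      rcases le_total a b with h | h
      · exact hc' (.inl (⟨(a, b), h⟩, μ))
      · rw [hsy (bW a) (bW b)]
        exact hc' (.inl (⟨(b, a), h⟩, μ))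
    have hW0 : ∀ a b : Fin n, cl (bW a) ↑(bW b) = 0 := by
      intro a b
      apply hzero
      rintro (d | μ)
      · rw [real_inner_comm]; exact hWblock a b d
      · rw [real_inner_comm]; exact hWP a b μ
    have hPblock : ∀ (a : Fin n) (μ : Fin m) (j : Fin n ⊕ Fin m),
        ⟪e j, cl (bW a) ↑(bP μ)⟫ = 0 := by
      intro a μ j
      rcases j with b | ν
      · have h1 := hsk (bW a) ↑(bW b) ↑(bP μ)
        rw [hW0 a b] at h1
        simp only [inner_zero_left] at h1
        have := h1.symm
        rw [neg_eq_zero] at this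
        exact this
      · rcases lt_trichotomy μ ν with h | rfl | h
        · rw [real_inner_comm]
          exact hc' (.inr (a, ⟨(μ, ν), h⟩))
        · show ⟪(bP μ : V), cl (bW a) ↑(bP μ)⟫ = 0
          have h1 := hsk (bW a) ↑(bP μ) ↑(bP μ)
          rw [real_inner_comm] at h1
          linarith
        · show ⟪(bP ν : V), cl (bW a) ↑(bP μ)⟫ = 0
          have h1 := hsk (bW a) ↑(bP ν) ↑(bP μ)
          have h2 : ⟪cl (bW a) ↑(bP ν), (bP μ : V)⟫ = 0 := hc' (.inr (a, ⟨(ν, μ), h⟩))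
          rw [h2] at h1
          linarith [h1]
    have hP0 : ∀ (a : Fin n) (μ : Fin m), cl (bW a) ↑(bP μ) = 0 := fun a μ =>
      hzero _ (hPblock a μ)
    have hcl0 : ∀ a, cl (bW a) = 0 := by
      intro a
      apply B.ext
      rintro (b | μ) <;> rw [hBe] <;> simp only [LinearMap.zero_apply]
      · exact hW0 a b
      · exact hP0 a μ
    apply Subtype.ext
    show cl = 0
    apply bW.toBasis.ext
    intro a
    rw [show bW.toBasis a = bW a from congrFun bW.coe_toBasis a]
    simp [hcl0 a]
  have hFsurj : Function.Surjective F := by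
    intro f
    set G : Fin n → V →ₗ[ℝ] V := fun a => B.constr ℝ (fun i => ∑ j, spencerH f a i j • e j)
      with hGdef
    have hGe : ∀ (a : Fin n) (i : Fin n ⊕ Fin m),
        G a (e i) = ∑ j, spencerH f a i j • e j := by
      intro a i
      rw [show e i = B i from (congrFun hBe i).symm]
      exact B.constr_basis ℝ _ i
    have hG : ∀ (a : Fin n) (i j : Fin n ⊕ Fin m), ⟪G a (e i), e j⟫ = spencerH f a i j := by
      intro a i j
      rw [hGe, sum_inner]
      simp only [real_inner_smul_left, hinner]
      rw [Finset.sum_eq_single j]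
      · simp
      · intro k _ hk
        simp [hk]
      · simp
    have hGskew : ∀ (a : Fin n) (u v : V), ⟪G a u, v⟫ = - ⟪u, G a v⟫ := by
      intro a
      apply spencer_skew_of_basis ob
      intro i j
      rw [show ob i = e i from congrFun hobe i, show ob j = e j from congrFun hobe j]
      rw [hG a i j, real_inner_comm, hG a j i, spencerH_skew]
    have hGsymW : ∀ a b : Fin n, G a ↑(bW b) = G b ↑(bW a) := by
      intro a b
      have h1 := hGe a (.inl b)
      have h2 := hGe b (.inl a)
      rw [show ((bW b : V)) = e (.inl b) from rfl, show ((bW a : V)) = e (.inl a) from rfl,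
        h1, h2]
      exact Finset.sum_congr rfl fun j _ => by rw [spencerH_symm]
    set cl : W →ₗ[ℝ] V →ₗ[ℝ] V := bW.toBasis.constr ℝ G with hcldef
    have hclW : ∀ a, cl (bW a) = G a := by
      intro a
      have h := bW.toBasis.constr_basis ℝ G a
      rwa [show bW.toBasis a = bW a from congrFun bW.coe_toBasis a] at h
    have hskew_all : ∀ (x : W) (u v : V), ⟪cl x u, v⟫ = - ⟪u, cl x v⟫ := by
      intro x u v
      rw [hcldef, Basis.constr_apply_fintype, LinearMap.sum_apply, LinearMap.sum_apply,
        sum_inner, inner_sum, ← Finset.sum_neg_distrib]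
      refine Finset.sum_congr rfl fun a _ => ?_
      simp only [LinearMap.smul_apply, real_inner_smul_left, real_inner_smul_right]
      rw [hGskew a u v]
      ring
    have hsym_all : ∀ x y : W, cl x ↑y = cl y ↑x := by
      have hbase : ∀ i j : Fin n,
          (cl.compl₂ W.subtype) (bW.toBasis i) (bW.toBasis j)
            = (cl.compl₂ W.subtype) (bW.toBasis j) (bW.toBasis i) := by
        intro i j
        simp only [LinearMap.compl₂_apply, Submodule.subtype_apply,
          show bW.toBasis i = bW i from congrFun bW.coe_toBasis i,
          show bW.toBasis j = bW j from congrFun bW.coe_toBasis j]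
        rw [hclW, hclW, hGsymW]
      have h := spencer_symm_of_basis bW.toBasis (cl.compl₂ W.subtype) hbase
      intro x y
      simpa using h x y
    refine ⟨⟨cl, hskew_all, hsym_all⟩, ?_⟩
    funext idx
    rcases idx with ⟨⟨⟨a, b⟩, hab⟩, μ⟩ | ⟨a, ⟨⟨μ, ν⟩, hμν⟩⟩
    · show ⟪cl (bW a) ↑(bW b), (bP μ : V)⟫ = f (.inl (⟨(a, b), hab⟩, μ))
      rw [hclW]
      have h := hG a (.inl b) (.inr μ)
      rw [show e (.inl b) = ((bW b : V)) from rfl, show e (.inr μ) = ((bP μ : V)) from rfl] at h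
      rw [h]
      show f (.inl (spencerSympair a b, μ)) = _
      rw [spencerSympair_of_le hab]
    · show ⟪cl (bW a) ↑(bP μ), (bP ν : V)⟫ = f (.inr (a, ⟨(μ, ν), hμν⟩))
      rw [hclW]
      have h := hG a (.inr μ) (.inr ν)
      rw [show e (.inr μ) = ((bP μ : V)) from rfl, show e (.inr ν) = ((bP ν : V)) from rfl] at h
      rw [h]
      show (if h : μ < ν then f (.inr (a, ⟨(μ, ν), h⟩))
          else if h' : ν < μ then - f (.inr (a, ⟨(ν, μ), h'⟩)) else 0) = _
      rw [dif_pos hμν]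
  have hrank : finrank ℝ ↥(spencerZ11 V W) = Fintype.card (spencerPairIdx n m) := by
    rw [(LinearEquiv.ofBijective F ⟨hFinj, hFsurj⟩).finrank_eq]
    exact Module.finrank_fintype_fun_eq_card ℝ
  rw [hrank, hnm]
  rw [Fintype.card_sum, Fintype.card_prod, Fintype.card_prod, spencer_card_le_pairs,
    spencer_card_lt_pairs, Fintype.card_fin, Fintype.card_fin]
  ring
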